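/- arXiv:1503.05121 — 2 statements merged into one kernel-verified Lean document; each statement's English description precedes it below -/
import Mathlib

section
/- If f: ℤ → ℂ is a function supported on a finite set and H > 0 is a real number, then ∫_𝕋 ( ∫_ℝ |∑_{x ≤ n ≤ x+H} f(n) e(αn)|² dx )² dα = ∑_{h ∈ ℤ, |h| ≤ H} (H − |h|)² · |∑_{n ∈ ℤ} f(n) · conj(f(n+h))|², where 𝕋 = ℝ/ℤ, the inner sums are over integers n, and for each α the inner dx-integral is over x ∈ ℝ. -/
open Finset MeasureTheory

/-- The additive character `e(x) = e^{2πix}`. -/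
noncomputable def eChar (x : ℝ) : ℂ := Complex.exp (2 * Real.pi * Complex.I * x)

lemma eChar_add (x y : ℝ) : eChar (x + y) = eChar x * eChar y := by
  simp only [eChar, Complex.ofReal_add, mul_add, Complex.exp_add]

lemma eChar_conj (x : ℝ) : (starRingEnd ℂ) (eChar x) = eChar (-x) := by
  simp only [eChar, ← Complex.exp_conj, map_mul, Complex.conj_I, Complex.conj_ofReal,
    map_ofNat, Complex.ofReal_neg]
  ring_nf

lemma eChar_cont (k : ℤ) : Continuous fun α : ℝ => eChar (α * k) := by
  unfold eChar; fun_prop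

lemma eChar_orth (k : ℤ) :
    ∫ α in (0:ℝ)..1, eChar (α * k) = if k = 0 then 1 else 0 := by
  have hrw : ∀ α : ℝ, eChar (α * k) = Complex.exp ((2 * Real.pi * Complex.I * k) * α) := by
    intro α; unfold eChar; push_cast; ring_nf
  rcases eq_or_ne k 0 with hk | hk
  · simp [hrw, hk, eChar, Complex.ofReal_zero]
  · have hc : (2 * Real.pi * Complex.I * k : ℂ) ≠ 0 := by
      simp [Real.pi_ne_zero, Complex.I_ne_zero, hk, Complex.ofReal_ne_zero]
    rw [if_neg hk]
    calc ∫ α in (0:ℝ)..1, eChar (α * k)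
        = ∫ α in (0:ℝ)..1, Complex.exp ((2 * Real.pi * Complex.I * k) * α) := by
          simp_rw [hrw]
      _ = 0 := by
          rw [integral_exp_mul_complex hc]
          have h1 : (2 * Real.pi * Complex.I * k : ℂ) * ((1:ℝ):ℂ) = (k : ℤ) * (2 * Real.pi * Complex.I) := by push_cast; ring
          have h0 : (2 * Real.pi * Complex.I * k : ℂ) * ((0:ℝ):ℂ) = 0 := by push_cast; ring
          rw [h1, h0, Complex.exp_zero, Complex.exp_int_mul_two_pi_mul_I]
          simp

lemma sum_window (f : ℤ → ℂ) (s : Finset ℤ) (hs : ∀ n, f n ≠ 0 → n ∈ s)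
    (H : ℝ) (α x : ℝ) :
    (∑ n ∈ Finset.Icc ⌈x⌉ ⌊x + H⌋, f n * eChar (α * n))
      = ∑ n ∈ s, (Set.Icc ((n:ℝ) - H) (n:ℝ)).indicator (fun _ => f n * eChar (α * n)) x := by
  classical
  set u := s ∪ Finset.Icc ⌈x⌉ ⌊x + H⌋ with hu
  have mem_iff : ∀ n : ℤ, n ∈ Finset.Icc ⌈x⌉ ⌊x + H⌋ ↔ x ∈ Set.Icc ((n:ℝ) - H) (n:ℝ) := by
    intro n
    simp only [Finset.mem_Icc, Set.mem_Icc, Int.ceil_le, Int.le_floor]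
    constructor
    · rintro ⟨h1, h2⟩; exact ⟨by linarith, h1⟩
    · rintro ⟨h1, h2⟩; exact ⟨h2, by linarith⟩
  have step1 : (∑ n ∈ Finset.Icc ⌈x⌉ ⌊x + H⌋, f n * eChar (α * n))
      = ∑ n ∈ Finset.Icc ⌈x⌉ ⌊x + H⌋,
          (Set.Icc ((n:ℝ) - H) (n:ℝ)).indicator (fun _ => f n * eChar (α * n)) x := by
    refine Finset.sum_congr rfl fun n hn => ?_
    rw [Set.indicator_of_mem ((mem_iff n).1 hn)]
  rw [step1]
  rw [Finset.sum_subset (Finset.subset_union_right (s₁ := s)) ?_,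
    ← Finset.sum_subset (Finset.subset_union_left (s₂ := Finset.Icc ⌈x⌉ ⌊x + H⌋)) ?_]
  · intro n _ hn
    have : f n = 0 := by by_contra h; exact hn (hs n h)
    simp [this]
  · intro n _ hn
    rw [Set.indicator_of_notMem (fun hx => hn ((mem_iff n).2 hx))]

lemma integrable_ind (a b : ℝ) (c : ℂ) :
    Integrable ((Set.Icc a b).indicator fun _ => c) := by
  rw [integrable_indicator_iff measurableSet_Icc]
  exact integrableOn_const measure_Icc_lt_top.ne

lemma integral_ind (a b : ℝ) (c : ℂ) :
    ∫ x : ℝ, (Set.Icc a b).indicator (fun _ => c) x = ((max (b - a) 0 : ℝ) : ℂ) * c := by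
  rw [integral_indicator_const c measurableSet_Icc, Real.volume_real_Icc,
    Complex.real_smul]

lemma widths (n m H : ℝ) : max (min n m - max (n - H) (m - H)) 0 = max (H - |n - m|) 0 := by
  have h1 : max (n - H) (m - H) = max n m - H := (max_sub_sub_right n m H)
  have h2 : max n m - min n m = |n - m| := by rw [max_sub_min_eq_abs, abs_sub_comm]
  congr 1
  linarith

lemma inner_integral (f : ℤ → ℂ) (s : Finset ℤ) (hs : ∀ n, f n ≠ 0 → n ∈ s)
    (H : ℝ) (α : ℝ)
    (hsw : ∀ x : ℝ, (∑ n ∈ Finset.Icc ⌈x⌉ ⌊x + H⌋, f n * eChar (α * n))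
      = ∑ n ∈ s, (Set.Icc ((n:ℝ) - H) (n:ℝ)).indicator (fun _ => f n * eChar (α * n)) x) :
    ((∫ x : ℝ, (‖∑ n ∈ Finset.Icc ⌈x⌉ ⌊x + H⌋, f n * eChar (α * n)‖) ^ 2 : ℝ) : ℂ)
      = ∑ p ∈ s ×ˢ s, ((max (H - |((p.1 - p.2 : ℤ) : ℝ)|) 0 : ℝ) : ℂ) *
          (f p.1 * (starRingEnd ℂ) (f p.2) * eChar (α * ((p.1 - p.2 : ℤ) : ℝ))) := by
  classical
  have h0 : ((∫ x : ℝ, (‖∑ n ∈ Finset.Icc ⌈x⌉ ⌊x + H⌋, f n * eChar (α * n)‖) ^ 2 : ℝ) : ℂ)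
      = ∫ x : ℝ, (((‖∑ n ∈ Finset.Icc ⌈x⌉ ⌊x + H⌋, f n * eChar (α * n)‖) ^ 2 : ℝ) : ℂ) :=
    integral_ofReal.symm
  rw [h0]
  have key : ∀ x : ℝ,
      (((‖∑ n ∈ Finset.Icc ⌈x⌉ ⌊x + H⌋, f n * eChar (α * n)‖) ^ 2 : ℝ) : ℂ)
        = ∑ p ∈ s ×ˢ s, (Set.Icc (max ((p.1:ℝ) - H) ((p.2:ℝ) - H)) (min (p.1:ℝ) (p.2:ℝ))).indicator
            (fun _ => f p.1 * (starRingEnd ℂ) (f p.2) * eChar (α * ((p.1 - p.2 : ℤ) : ℝ))) x := by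
    intro x
    rw [Complex.sq_norm, ← Complex.mul_conj, hsw x, map_sum, Finset.sum_mul_sum,
      ← Finset.sum_product']
    refine Finset.sum_congr rfl fun p _ => ?_
    have hconj : (starRingEnd ℂ) ((Set.Icc ((p.2:ℝ) - H) (p.2:ℝ)).indicator
        (fun _ => f p.2 * eChar (α * p.2)) x)
        = (Set.Icc ((p.2:ℝ) - H) (p.2:ℝ)).indicator
            (fun _ => (starRingEnd ℂ) (f p.2) * eChar (-(α * p.2))) x := by
      by_cases hx : x ∈ Set.Icc ((p.2:ℝ) - H) (p.2:ℝ)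
      · rw [Set.indicator_of_mem hx, Set.indicator_of_mem hx, map_mul, eChar_conj]
      · rw [Set.indicator_of_notMem hx, Set.indicator_of_notMem hx, map_zero]
    rw [hconj, ← Set.inter_indicator_mul, ← Set.Icc_inter_Icc]
    congr 1
    funext y
    rw [show f p.1 * eChar (α * p.1) * ((starRingEnd ℂ) (f p.2) * eChar (-(α * p.2)))
      = f p.1 * (starRingEnd ℂ) (f p.2) * (eChar (α * p.1) * eChar (-(α * p.2))) by ring,
      ← eChar_add]
    congr 2
    push_cast
    ring
  simp_rw [key]
  rw [integral_finset_sum _ (fun p _ => integrable_ind _ _ _)]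
  refine Finset.sum_congr rfl fun p _ => ?_
  rw [integral_ind, widths]
  congr 3
  push_cast
  ring

lemma reindex (f : ℤ → ℂ) (s : Finset ℤ) (hs : ∀ n, f n ≠ 0 → n ∈ s)
    (H : ℝ) (hH : 0 < H) (α : ℝ) :
    ∑ p ∈ s ×ˢ s, ((max (H - |((p.1 - p.2 : ℤ) : ℝ)|) 0 : ℝ) : ℂ) *
          (f p.1 * (starRingEnd ℂ) (f p.2) * eChar (α * ((p.1 - p.2 : ℤ) : ℝ)))
      = ∑ h ∈ Finset.Icc (-⌊H⌋) ⌊H⌋, ((max (H - |(h:ℝ)|) 0 : ℝ) : ℂ) *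
          ((∑ n ∈ s, f n * (starRingEnd ℂ) (f (n + h))) * eChar (α * ((-h : ℤ) : ℝ))) := by
  classical
  set L := ⌊H⌋ with hL
  have hcast : ∀ h : ℤ, (L < h ∨ h < -L) → max (H - |((h : ℤ) : ℝ)|) 0 = 0 := by
    intro h hh
    have h1 : (L : ℝ) + 1 ≤ |(h : ℝ)| := by
      rcases hh with hh | hh
      · calc (L : ℝ) + 1 ≤ (h : ℝ) := by exact_mod_cast hh
          _ ≤ |(h : ℝ)| := le_abs_self _
      · calc (L : ℝ) + 1 ≤ (-h : ℤ) := by exact_mod_cast (by omega : L + 1 ≤ -h)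
          _ = -(h:ℝ) := by push_cast; ring
          _ ≤ |(h : ℝ)| := neg_le_abs _
    have h2 : H < (L : ℝ) + 1 := Int.lt_floor_add_one H
    exact max_eq_right (by linarith)
  rw [Finset.sum_product]
  have inner : ∀ n ∈ s, (∑ m ∈ s, ((max (H - |((n - m : ℤ) : ℝ)|) 0 : ℝ) : ℂ) *
          (f n * (starRingEnd ℂ) (f m) * eChar (α * ((n - m : ℤ) : ℝ))))
      = ∑ h ∈ Finset.Icc (-L) L, ((max (H - |(h:ℝ)|) 0 : ℝ) : ℂ) *
          (f n * (starRingEnd ℂ) (f (n + h)) * eChar (α * ((-h : ℤ) : ℝ))) := by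
    intro n _
    have e1 : (∑ m ∈ s, ((max (H - |((n - m : ℤ) : ℝ)|) 0 : ℝ) : ℂ) *
          (f n * (starRingEnd ℂ) (f m) * eChar (α * ((n - m : ℤ) : ℝ))))
        = ∑ m ∈ Finset.Icc (n - L) (n + L), ((max (H - |((n - m : ℤ) : ℝ)|) 0 : ℝ) : ℂ) *
          (f n * (starRingEnd ℂ) (f m) * eChar (α * ((n - m : ℤ) : ℝ))) := by
      have t1 := Finset.sum_subset (Finset.subset_union_left
          (s₁ := s) (s₂ := Finset.Icc (n - L) (n + L)))
          (f := fun m => ((max (H - |((n - m : ℤ) : ℝ)|) 0 : ℝ) : ℂ) *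
            (f n * (starRingEnd ℂ) (f m) * eChar (α * ((n - m : ℤ) : ℝ)))) ?_
      · rw [t1]
        refine (Finset.sum_subset (Finset.subset_union_right
            (s₁ := s) (s₂ := Finset.Icc (n - L) (n + L))) ?_).symm
        intro m _ hm
        simp only [Finset.mem_Icc, not_and_or, not_le] at hm
        have : max (H - |((n - m : ℤ) : ℝ)|) 0 = 0 := by
          apply hcast; omega
        rw [this, Complex.ofReal_zero, zero_mul]
      · intro m _ hm
        have : f m = 0 := by by_contra h; exact hm (hs m h)
        simp [this]
    rw [e1]
    rw [show Finset.Icc (n - L) (n + L) = (Finset.Icc (-L) L).map (addLeftEmbedding n) by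
      rw [Finset.map_add_left_Icc]; congr 1 <;> ring, Finset.sum_map]
    refine Finset.sum_congr rfl fun h _ => ?_
    simp only [addLeftEmbedding_apply]
    rw [show n - (n + h) = -h by ring]
    have habs : |((-h : ℤ) : ℝ)| = |(h : ℝ)| := by push_cast; rw [abs_neg]
    rw [habs]
  rw [Finset.sum_congr rfl inner, Finset.sum_comm]
  refine Finset.sum_congr rfl fun h _ => ?_
  rw [Finset.sum_mul, Finset.mul_sum]
  try exact Finset.sum_congr rfl fun n _ => by ring

lemma c_neg (f : ℤ → ℂ) (s : Finset ℤ) (hs : ∀ n, f n ≠ 0 → n ∈ s) (h : ℤ) :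
    (∑ n ∈ s, f n * (starRingEnd ℂ) (f (n + (-h))))
      = (starRingEnd ℂ) (∑ n ∈ s, f n * (starRingEnd ℂ) (f (n + h))) := by
  classical
  rw [map_sum]
  simp only [map_mul, Complex.conj_conj]
  set u := s ∪ s.image (· + h) with hu
  have e1 : (∑ n ∈ s, f n * (starRingEnd ℂ) (f (n + (-h))))
      = ∑ n ∈ u, f n * (starRingEnd ℂ) (f (n + (-h))) := by
    refine Finset.sum_subset Finset.subset_union_left fun m _ hm => ?_
    have : f m = 0 := by by_contra hc; exact hm (hs m hc)
    simp [this]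
  have e2 : (∑ n ∈ s, (starRingEnd ℂ) (f n) * f (n + h))
      = ∑ m ∈ u, f m * (starRingEnd ℂ) (f (m + (-h))) := by
    rw [show (∑ n ∈ s, (starRingEnd ℂ) (f n) * f (n + h))
        = ∑ m ∈ s.image (· + h), f m * (starRingEnd ℂ) (f (m + (-h))) by
      rw [Finset.sum_image (by intro a _ b _ hab; exact add_right_cancel hab)]
      refine Finset.sum_congr rfl fun n _ => ?_
      rw [show n + h + (-h) = n by ring]; ring]
    refine Finset.sum_subset Finset.subset_union_right fun m _ hm => ?_
    have : f (m + (-h)) = 0 := by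
      by_contra hc
      exact hm (Finset.mem_image.2 ⟨m + (-h), hs _ hc, by ring⟩)
    simp [this]
  rw [e1, e2]

lemma parseval (T : Finset ℤ) (hT : ∀ h ∈ T, -h ∈ T) (a : ℤ → ℂ) :
    (∫ α in (0:ℝ)..1, (∑ h ∈ T, a h * eChar (α * ((-h : ℤ) : ℝ))) ^ 2)
      = ∑ h ∈ T, a h * a (-h) := by
  classical
  have expand : ∀ α : ℝ, (∑ h ∈ T, a h * eChar (α * ((-h : ℤ) : ℝ))) ^ 2
      = ∑ p ∈ T ×ˢ T, (a p.1 * a p.2) * eChar (α * ((-p.1 - p.2 : ℤ) : ℝ)) := by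
    intro α
    rw [sq, Finset.sum_mul_sum, ← Finset.sum_product']
    refine Finset.sum_congr rfl fun p _ => ?_
    rw [show a p.1 * eChar (α * ((-p.1 : ℤ) : ℝ)) * (a p.2 * eChar (α * ((-p.2 : ℤ) : ℝ)))
      = (a p.1 * a p.2) * (eChar (α * ((-p.1 : ℤ) : ℝ)) * eChar (α * ((-p.2 : ℤ) : ℝ))) by ring,
      ← eChar_add]
    congr 2
    push_cast; ring
  simp_rw [expand]
  rw [intervalIntegral.integral_finset_sum (fun p _ =>
    (((continuous_const).mul (eChar_cont _)).intervalIntegrable _ _ : IntervalIntegrable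
      (fun α : ℝ => (a p.1 * a p.2) * eChar (α * ((-p.1 - p.2 : ℤ) : ℝ))) volume 0 1))]
  have term : ∀ p ∈ T ×ˢ T, (∫ α in (0:ℝ)..1, (a p.1 * a p.2) * eChar (α * ((-p.1 - p.2 : ℤ) : ℝ)))
      = if p.2 = -p.1 then a p.1 * a p.2 else 0 := by
    intro p _
    rw [intervalIntegral.integral_const_mul, eChar_orth]
    rcases eq_or_ne p.2 (-p.1) with h | h
    · rw [if_pos (by omega), if_pos h, mul_one]
    · rw [if_neg (by omega), if_neg h, mul_zero]
  rw [Finset.sum_congr rfl term, Finset.sum_product]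
  refine Finset.sum_congr rfl fun h hh => ?_
  rw [Finset.sum_ite_eq' T (-h) (fun h' => a h * a h'), if_pos (hT h hh)]

/-- **Lemma 1.4** (Fourier identity): for finitely supported `f : ℤ → ℂ` and `H > 0`,
`∫_𝕋 (∫_ℝ |∑_{x ≤ n ≤ x+H} f(n) e(αn)|² dx)² dα
  = ∑_{|h| ≤ H} (H-|h|)² |∑_n f(n) conj(f(n+h))|²`. -/
theorem fourier_identity (f : ℤ → ℂ) (hf : (Function.support f).Finite)
    (H : ℝ) (hH : 0 < H) :
    ∫ α in (0 : ℝ)..1,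
        (∫ x : ℝ, ‖∑ n ∈ Finset.Icc ⌈x⌉ ⌊x + H⌋,
            f n * eChar (α * n)‖ ^ 2) ^ 2
      = ∑ h ∈ Finset.Icc (-⌊H⌋) ⌊H⌋,
          (H - |(h : ℝ)|) ^ 2 *
            ‖∑ᶠ n : ℤ, f n * (starRingEnd ℂ) (f (n + h))‖ ^ 2 := by
  classical
  set s := hf.toFinset with hsdef
  have hs : ∀ n, f n ≠ 0 → n ∈ s := fun n hn => hf.mem_toFinset.2 hn
  set T := Finset.Icc (-⌊H⌋) ⌊H⌋ with hT
  have hTsymm : ∀ h ∈ T, -h ∈ T := by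
    intro h hh; simp only [hT, Finset.mem_Icc] at hh ⊢; omega
  set c : ℤ → ℂ := fun h => ∑ n ∈ s, f n * (starRingEnd ℂ) (f (n + h)) with hc
  set a : ℤ → ℂ := fun h => ((max (H - |(h:ℝ)|) 0 : ℝ) : ℂ) * c h with ha
  -- pointwise identity for the inner integral
  have inner : ∀ α : ℝ,
      ((∫ x : ℝ, (‖∑ n ∈ Finset.Icc ⌈x⌉ ⌊x + H⌋, f n * eChar (α * n)‖) ^ 2 : ℝ) : ℂ)
        = ∑ h ∈ T, a h * eChar (α * ((-h : ℤ) : ℝ)) := by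
    intro α
    rw [inner_integral f s hs H α (sum_window f s hs H α), reindex f s hs H hH α]
    exact Finset.sum_congr rfl fun h _ => by rw [ha, hc]; ring
  -- coerce the LHS to ℂ
  apply Complex.ofReal_injective
  have lhs0 : ((∫ α in (0 : ℝ)..1,
        (∫ x : ℝ, (‖∑ n ∈ Finset.Icc ⌈x⌉ ⌊x + H⌋,
            f n * eChar (α * n)‖) ^ 2) ^ 2 : ℝ) : ℂ)
      = ∫ α in (0 : ℝ)..1, (((∫ x : ℝ, (‖∑ n ∈ Finset.Icc ⌈x⌉ ⌊x + H⌋,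
            f n * eChar (α * n)‖) ^ 2) ^ 2 : ℝ) : ℂ) :=
    (intervalIntegral.integral_ofReal).symm
  rw [lhs0]
  have lhs1 : ∀ α : ℝ, (((∫ x : ℝ, (‖∑ n ∈ Finset.Icc ⌈x⌉ ⌊x + H⌋,
            f n * eChar (α * n)‖) ^ 2) ^ 2 : ℝ) : ℂ)
      = (∑ h ∈ T, a h * eChar (α * ((-h : ℤ) : ℝ))) ^ 2 := by
    intro α
    rw [Complex.ofReal_pow, inner α]
  simp_rw [lhs1]
  rw [parseval T hTsymm a]
  -- compute each term
  rw [Complex.ofReal_sum]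
  refine Finset.sum_congr rfl fun h hh => ?_
  have habs : |(h:ℝ)| ≤ H := by
    simp only [hT, Finset.mem_Icc] at hh
    have h1 : |h| ≤ ⌊H⌋ := abs_le.mpr ⟨by omega, hh.2⟩
    calc |(h:ℝ)| = ((|h| : ℤ) : ℝ) := by push_cast; rfl
      _ ≤ (⌊H⌋ : ℝ) := by exact_mod_cast h1
      _ ≤ H := Int.floor_le H
  have hw : max (H - |(h:ℝ)|) 0 = H - |(h:ℝ)| := max_eq_left (by linarith)
  have hfin : (∑ᶠ n : ℤ, f n * (starRingEnd ℂ) (f (n + h))) = c h := by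
    rw [hc]
    refine finsum_eq_sum_of_support_subset _ ?_
    intro n hn
    have : f n ≠ 0 := by
      intro h0
      apply hn
      simp [h0]
    exact hf.mem_toFinset.2 this
  have hcc : a h * a (-h) = ((H - |(h:ℝ)|)^2 : ℝ) * (c h * (starRingEnd ℂ) (c h)) := by
    have habs' : |((-h : ℤ):ℝ)| = |(h:ℝ)| := by push_cast; rw [abs_neg]
    simp only [ha, hc]
    rw [habs', hw, c_neg f s hs h]
    push_cast
    ring
  rw [hcc, hfin, Complex.mul_conj, ← Complex.sq_norm]
  push_cast
  ring
end

section
/- For every Dirichlet character χ and every real number t, the series ∑_p (1 + Re(χ(p) p^{it}))/p over primes p diverges. Equivalently, M(λ; ∞, ∞) = ∞, i.e., the Liouville function λ does not pretend to be any twisted Dirichlet character n ↦ χ(n) n^{it}. -/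
open Finset Filter

namespace LiouvilleNotPretentiousAux

open Complex

lemma norm_char_mul_cpow_I_le {q : ℕ} (ψ : DirichletCharacter ℂ q) (u : ℝ) {n : ℕ}
    (hn : 0 < n) : ‖ψ (n : ZMod q) * (n : ℂ) ^ (I * (u : ℂ))‖ ≤ 1 := by
  rw [norm_mul]
  have h0 : (0:ℝ) < (n:ℝ) := by exact_mod_cast hn
  have h1 : ‖(n:ℂ) ^ (I * (u:ℂ))‖ = 1 := by
    rw [show ((n:ℕ):ℂ) = (((n:ℕ):ℝ):ℂ) by norm_cast,
      norm_cpow_eq_rpow_re_of_pos h0]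
    simp
  rw [h1, mul_one]
  exact ψ.norm_le_one _

lemma exists_log_norm_LFunction_bound {q : ℕ} [NeZero q] (ψ : DirichletCharacter ℂ q) (u : ℝ)
    (h : ψ ≠ 1 ∨ u ≠ 0) :
    ∃ Cg : ℝ, ∀ σ : ℝ, σ ∈ Set.Icc (1:ℝ) 2 →
      |Real.log ‖ψ.LFunction ((σ:ℂ) - I * u)‖| ≤ Cg := by
  have hne : ∀ σ : ℝ, σ ∈ Set.Icc (1:ℝ) 2 → ((σ:ℂ) - I * u ≠ 1 ∨ ψ ≠ 1) := by
    intro σ hσ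
    rcases h with h | h
    · exact Or.inr h
    · refine Or.inl fun hc => h ?_
      have := congrArg Complex.im hc
      simp at this
      exact this
  have hre : ∀ σ : ℝ, σ ∈ Set.Icc (1:ℝ) 2 → 1 ≤ ((σ:ℂ) - I * u).re := by
    intro σ hσ; simp [hσ.1]
  have hLne : ∀ σ : ℝ, σ ∈ Set.Icc (1:ℝ) 2 → ψ.LFunction ((σ:ℂ) - I * u) ≠ 0 := by
    intro σ hσ
    exact ψ.LFunction_ne_zero_of_one_le_re (by
      rcases hne σ hσ with h' | h'
      · exact Or.inr h'
      · exact Or.inl h') (hre σ hσ)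
  have hcont : ContinuousOn (fun σ : ℝ => Real.log ‖ψ.LFunction ((σ:ℂ) - I * u)‖)
      (Set.Icc (1:ℝ) 2) := by
    intro σ hσ
    have hc2 : ContinuousAt (fun σ : ℝ => (σ:ℂ) - I * u) σ := by fun_prop
    have hL : ContinuousAt (fun σ : ℝ => ψ.LFunction ((σ:ℂ) - I * u)) σ :=
      ContinuousAt.comp (ψ.differentiableAt_LFunction _ (hne σ hσ)).continuousAt hc2
    exact ((hL.norm.log (by simpa using hLne σ hσ)).continuousWithinAt)
  obtain ⟨C, hC⟩ := isCompact_Icc.exists_bound_of_continuousOn hcont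
  exact ⟨C, fun σ hσ => by simpa [Real.norm_eq_abs] using hC σ hσ⟩

lemma smoothed_re_sum_bound {q : ℕ} [NeZero q] (ψ : DirichletCharacter ℂ q) (u : ℝ)
    (h : ψ ≠ 1 ∨ u ≠ 0) :
    ∃ C : ℝ, ∀ σ : ℝ, 1 < σ → σ ≤ 2 →
      |∑' p : Nat.Primes,
        (ψ ((p:ℕ) : ZMod q) * ((p:ℕ):ℂ) ^ (I * (u:ℂ))).re * ((p:ℕ):ℝ) ^ (-σ)| ≤ C := by
  obtain ⟨Cg, hCg⟩ := exists_log_norm_LFunction_bound ψ u h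
  set K₀ : ℝ := ∑' p : Nat.Primes, ((p:ℕ):ℝ) ^ (-2 : ℝ) with hK₀
  have hsum2 : Summable (fun p : Nat.Primes => ((p:ℕ):ℝ) ^ (-2 : ℝ)) :=
    Nat.Primes.summable_rpow.mpr (by norm_num)
  refine ⟨Cg + K₀, fun σ hσ1 hσ2 => ?_⟩
  set s : ℂ := (σ:ℂ) - I * u with hs_def
  have hs : 1 < s.re := by simp [hs_def, hσ1]
  have hsre : (-s).re = -σ := by simp [hs_def]
  set w : Nat.Primes → ℂ := fun p => ψ ((p:ℕ) : ZMod q) * ((p:ℕ):ℂ) ^ (-s) with hw_def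
  have hpge : ∀ p : Nat.Primes, (2:ℝ) ≤ ((p:ℕ):ℝ) := fun p => by exact_mod_cast p.prop.two_le
  have hwn : ∀ p : Nat.Primes, ‖w p‖ ≤ ((p:ℕ):ℝ) ^ (-σ) := by
    intro p
    rw [hw_def]
    calc ‖ψ ((p:ℕ) : ZMod q) * ((p:ℕ):ℂ) ^ (-s)‖
        = ‖ψ ((p:ℕ) : ZMod q)‖ * ‖((p:ℕ):ℂ) ^ (-s)‖ := norm_mul _ _
      _ ≤ 1 * (((p:ℕ):ℝ) ^ (-σ)) := by
          refine mul_le_mul (ψ.norm_le_one _) ?_ (norm_nonneg _) zero_le_one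
          rw [norm_natCast_cpow_of_re_ne_zero _
            (by rw [hsre]; exact neg_ne_zero.mpr (by linarith)), hsre]
      _ = ((p:ℕ):ℝ) ^ (-σ) := one_mul _
  have hrple : ∀ p : Nat.Primes, ((p:ℕ):ℝ) ^ (-σ) ≤ ((p:ℕ):ℝ) ^ (-1 : ℝ) := fun p =>
    Real.rpow_le_rpow_of_exponent_le (by linarith [hpge p]) (by linarith)
  have hwhalf : ∀ p : Nat.Primes, ‖w p‖ ≤ 1/2 := by
    intro p
    refine (hwn p).trans ((hrple p).trans ?_)
    rw [Real.rpow_neg_one]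
    rw [show (1:ℝ)/2 = 2⁻¹ by norm_num]
    exact inv_anti₀ (by norm_num) (hpge p)
  have hsumσ : Summable (fun p : Nat.Primes => ((p:ℕ):ℝ) ^ (-σ)) :=
    Nat.Primes.summable_rpow.mpr (by linarith)
  have hw : Summable w :=
    Summable.of_norm <| hsumσ.of_nonneg_of_le (fun p => norm_nonneg _) hwn
  have hlog : Summable
      (fun p : Nat.Primes => -log (1 - ψ ((p:ℕ) : ZMod q) * ((p:ℕ):ℂ) ^ (-s))) :=
    ψ.summable_neg_log_one_sub_mul_prime_cpow hs
  have hexp : Real.log ‖ψ.LFunction s‖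
      = (∑' p : Nat.Primes, -log (1 - ψ ((p:ℕ) : ZMod q) * ((p:ℕ):ℂ) ^ (-s))).re := by
    rw [ψ.LFunction_eq_LSeries hs, ← ψ.LSeries_eulerProduct_exp_log hs]
    rw [Complex.norm_exp, Real.log_exp]
  set D : Nat.Primes → ℂ :=
    fun p => (-log (1 - ψ ((p:ℕ) : ZMod q) * ((p:ℕ):ℂ) ^ (-s))) - w p with hD_def
  have hDn : ∀ p : Nat.Primes, ‖D p‖ ≤ ((p:ℕ):ℝ) ^ (-2 : ℝ) := by
    intro p
    have hlt1 : ‖w p‖ < 1 := lt_of_le_of_lt (hwhalf p) (by norm_num)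
    have harg : (1 - w p).arg ≠ Real.pi := by
      refine slitPlane_arg_ne_pi ?_
      have := mem_slitPlane_of_norm_lt_one (z := -w p) (by rwa [norm_neg])
      simpa [sub_eq_add_neg] using this
    have hinv : -log (1 - w p) = log (1 - w p)⁻¹ := (Complex.log_inv _ harg).symm
    have hbd := Complex.norm_log_one_sub_inv_sub_self_le hlt1
    have h2 : (1 - ‖w p‖)⁻¹ ≤ 2 := by
      rw [inv_le_comm₀ (by linarith [hwhalf p]) (by norm_num)]
      linarith [hwhalf p]
    have hD_eq : D p = log (1 - w p)⁻¹ - w p := by rw [hD_def]; simp only [hw_def]; rw [← hinv]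
    calc ‖D p‖ = ‖log (1 - w p)⁻¹ - w p‖ := by rw [hD_eq]
      _ ≤ ‖w p‖ ^ 2 * (1 - ‖w p‖)⁻¹ / 2 := hbd
      _ ≤ ‖w p‖ ^ 2 * 2 / 2 := by
          gcongr
      _ = ‖w p‖ ^ 2 := by ring
      _ ≤ (((p:ℕ):ℝ) ^ (-σ)) ^ 2 := by
          have := hwn p
          nlinarith [norm_nonneg (w p)]
      _ = ((p:ℕ):ℝ) ^ (-σ * 2) := by
          rw [← Real.rpow_natCast (((p:ℕ):ℝ) ^ (-σ)) 2, ← Real.rpow_mul (by positivity)]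
          norm_num
      _ ≤ ((p:ℕ):ℝ) ^ (-2 : ℝ) :=
          Real.rpow_le_rpow_of_exponent_le (by linarith [hpge p]) (by linarith)
  have hDsum : Summable D := hlog.sub hw
  have hDnorm : ‖∑' p, D p‖ ≤ K₀ := by
    refine (norm_tsum_le_tsum_norm
      (hsum2.of_nonneg_of_le (fun p => norm_nonneg _) hDn)).trans ?_
    exact Summable.tsum_le_tsum hDn (hsum2.of_nonneg_of_le (fun p => norm_nonneg _) hDn) hsum2
  have hident : ∀ p : Nat.Primes,
      (ψ ((p:ℕ) : ZMod q) * ((p:ℕ):ℂ) ^ (I * (u:ℂ))).re * ((p:ℕ):ℝ) ^ (-σ) = (w p).re := by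
    intro p
    have hp0 : ((p:ℕ):ℂ) ≠ 0 := by exact_mod_cast (Nat.cast_ne_zero (R := ℂ)).mpr p.prop.pos.ne'
    have hsplit : ((p:ℕ):ℂ) ^ (-s) = ((p:ℕ):ℂ) ^ (I * (u:ℂ)) * ((p:ℕ):ℂ) ^ (-(σ:ℂ)) := by
      rw [← cpow_add _ _ hp0]
      congr 1
      rw [hs_def]; ring
    have hcast : ((((p:ℕ):ℝ) ^ (-σ) : ℝ) : ℂ) = ((p:ℕ):ℂ) ^ (-(σ:ℂ)) := by
      rw [Complex.ofReal_cpow (by positivity)]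
      push_cast
      ring_nf
    rw [hw_def]
    simp only [hsplit]
    rw [← mul_assoc, ← hcast, mul_comm _ ((((p:ℕ):ℝ) ^ (-σ) : ℝ) : ℂ), re_ofReal_mul]
    ring
  rw [tsum_congr hident]
  have htsum_w : (∑' p, w p) = (∑' p : Nat.Primes,
      -log (1 - ψ ((p:ℕ) : ZMod q) * ((p:ℕ):ℂ) ^ (-s))) - ∑' p, D p := by
    rw [hD_def, hlog.tsum_sub hw]; ring
  have hre : ∑' p, (w p).re = (∑' p, w p).re := (Complex.re_tsum hw).symm
  rw [hre, htsum_w, sub_re, ← hexp]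
  have h1 : |Real.log ‖ψ.LFunction s‖| ≤ Cg := hCg σ ⟨le_of_lt hσ1, hσ2⟩
  have h2 : |(∑' p, D p).re| ≤ K₀ := (Complex.abs_re_le_norm _).trans hDnorm
  calc |Real.log ‖ψ.LFunction s‖ - (∑' p, D p).re|
      ≤ |Real.log ‖ψ.LFunction s‖| + |(∑' p, D p).re| := abs_sub _ _
    _ ≤ Cg + K₀ := add_le_add h1 h2

lemma not_summable_pretend {q : ℕ} [NeZero q] (ψ : DirichletCharacter ℂ q) (u : ℝ)
    (h : ψ ≠ 1 ∨ u ≠ 0) {ε : ℝ} (hε : |ε| ≤ 1) :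
    ¬ Summable (fun p : Nat.Primes =>
      (1 + ε * (ψ ((p:ℕ) : ZMod q) * ((p:ℕ):ℂ) ^ (I * (u:ℂ))).re) / ((p:ℕ):ℝ)) := by
  intro hS
  set a : Nat.Primes → ℝ := fun p => (ψ ((p:ℕ) : ZMod q) * ((p:ℕ):ℂ) ^ (I * (u:ℂ))).re with ha
  have hpge : ∀ p : Nat.Primes, (2:ℝ) ≤ ((p:ℕ):ℝ) := fun p => by exact_mod_cast p.prop.two_le
  have hab : ∀ p, |a p| ≤ 1 := fun p =>
    (Complex.abs_re_le_norm _).trans (norm_char_mul_cpow_I_le ψ u p.prop.pos)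
  have hnn : ∀ p, 0 ≤ 1 + ε * a p := by
    intro p
    have : |ε * a p| ≤ 1 := by
      rw [abs_mul]
      exact mul_le_one₀ hε (abs_nonneg _) (hab p)
    have := abs_le.mp this
    linarith [this.1]
  set G : ℝ := ∑' p, (1 + ε * a p) / ((p:ℕ):ℝ) with hG
  obtain ⟨C, hC⟩ := smoothed_re_sum_bound ψ u h
  have hbound : ∀ σ : ℝ, 1 < σ → σ ≤ 2 → ∑' p : Nat.Primes, ((p:ℕ):ℝ) ^ (-σ) ≤ G + C := by
    intro σ hσ1 hσ2
    have h1 : Summable (fun p : Nat.Primes => ((p:ℕ):ℝ) ^ (-σ)) :=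
      Nat.Primes.summable_rpow.mpr (by linarith)
    have h2 : Summable (fun p : Nat.Primes => a p * ((p:ℕ):ℝ) ^ (-σ)) := by
      refine h1.of_norm_bounded (fun p => ?_)
      rw [Real.norm_eq_abs, abs_mul]
      calc |a p| * |((p:ℕ):ℝ) ^ (-σ)| ≤ 1 * |((p:ℕ):ℝ) ^ (-σ)| := by
            gcongr; exact hab p
        _ = ((p:ℕ):ℝ) ^ (-σ) := by rw [one_mul, _root_.abs_of_nonneg (by positivity)]
    have hptw : ∀ p : Nat.Primes,
        ((p:ℕ):ℝ) ^ (-σ) + ε * (a p * ((p:ℕ):ℝ) ^ (-σ)) ≤ (1 + ε * a p) / ((p:ℕ):ℝ) := by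
      intro p
      have hfact : ((p:ℕ):ℝ) ^ (-σ) + ε * (a p * ((p:ℕ):ℝ) ^ (-σ))
          = (1 + ε * a p) * ((p:ℕ):ℝ) ^ (-σ) := by ring
      rw [hfact, div_eq_mul_inv]
      have hle : ((p:ℕ):ℝ) ^ (-σ) ≤ (((p:ℕ):ℝ))⁻¹ := by
        rw [← Real.rpow_neg_one]
        exact Real.rpow_le_rpow_of_exponent_le (by linarith [hpge p]) (by linarith)
      exact mul_le_mul_of_nonneg_left hle (hnn p)
    have hsum_le :
        ∑' p : Nat.Primes, (((p:ℕ):ℝ) ^ (-σ) + ε * (a p * ((p:ℕ):ℝ) ^ (-σ))) ≤ G :=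
      Summable.tsum_le_tsum hptw (h1.add (h2.mul_left ε)) hS
    rw [h1.tsum_add (h2.mul_left ε), tsum_mul_left] at hsum_le
    have habs : |ε * ∑' p, a p * ((p:ℕ):ℝ) ^ (-σ)| ≤ C := by
      rw [abs_mul]
      calc |ε| * |∑' p, a p * ((p:ℕ):ℝ) ^ (-σ)| ≤ 1 * C := by
            refine mul_le_mul hε (hC σ hσ1 hσ2) (abs_nonneg _) zero_le_one
        _ = C := one_mul _
    have := abs_le.mp habs
    linarith [this.1]
  have hns : ¬ Summable (fun p : Nat.Primes => (((p:ℕ):ℝ))⁻¹) := by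
    intro hsum
    exact Nat.Primes.not_summable_one_div (by simpa [one_div] using hsum)
  obtain ⟨F, hF⟩ : ∃ F : Finset Nat.Primes, G + C + 1 < ∑ p ∈ F, (((p:ℕ):ℝ))⁻¹ := by
    by_contra hcon
    push_neg at hcon
    exact hns (summable_of_sum_le (fun p => by positivity) hcon)
  set S : ℝ → ℝ := fun σ => ∑ p ∈ F, ((p:ℕ):ℝ) ^ (-σ) with hS_def
  have hScont : Continuous S := by
    refine continuous_finset_sum _ (fun p _ => ?_)
    have hp : (0:ℝ) < ((p:ℕ):ℝ) := by linarith [hpge p]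
    have heq : (fun σ : ℝ => ((p:ℕ):ℝ) ^ (-σ))
        = fun σ => Real.exp (Real.log ((p:ℕ):ℝ) * (-σ)) :=
      funext fun σ => Real.rpow_def_of_pos hp (-σ)
    rw [heq]
    exact Real.continuous_exp.comp (by continuity)
  have hS1 : G + C + 1 < S 1 := by
    rw [hS_def]
    simpa [Real.rpow_neg_one] using hF
  have htend : Tendsto S (nhdsWithin 1 (Set.Ioi 1)) (nhds (S 1)) :=
    (hScont.tendsto 1).mono_left nhdsWithin_le_nhds
  have hev1 : ∀ᶠ σ in nhdsWithin (1:ℝ) (Set.Ioi 1), G + C < S σ :=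
    htend.eventually (eventually_gt_nhds (by linarith))
  have hev2 : ∀ᶠ σ in nhdsWithin (1:ℝ) (Set.Ioi 1), σ ∈ Set.Ioc (1:ℝ) 2 :=
    Ioc_mem_nhdsGT one_lt_two
  obtain ⟨σ, hσS, hσmem⟩ := (hev1.and hev2).exists
  have h1 : Summable (fun p : Nat.Primes => ((p:ℕ):ℝ) ^ (-σ)) :=
    Nat.Primes.summable_rpow.mpr (by linarith [hσmem.1])
  have : S σ ≤ ∑' p : Nat.Primes, ((p:ℕ):ℝ) ^ (-σ) :=
    Summable.sum_le_tsum F (fun p _ => by positivity) h1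
  have := this.trans (hbound σ hσmem.1 hσmem.2)
  linarith

end LiouvilleNotPretentiousAux

open LiouvilleNotPretentiousAux Complex in
/-- The Liouville function does not pretend to be any twisted Dirichlet character
`n ↦ χ(n) n^{it}`: for every Dirichlet character `χ` and every real `t`, the series
`∑_p (1 + Re(χ(p) p^{it}))/p` over primes diverges, i.e. `M(λ; ∞, ∞) = ∞`. -/
theorem liouville_not_pretentious (q : ℕ) (χ : DirichletCharacter ℂ q) (t : ℝ) :
    Tendsto (fun N : ℕ => ∑ p ∈ (Finset.range N).filter Nat.Prime,
        (1 + (χ (p : ZMod q) * (p : ℂ) ^ (Complex.I * t)).re) / p)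
      atTop atTop := by
  set g : ℕ → ℝ := fun n => (1 + (χ (n : ZMod q) * (n : ℂ) ^ (Complex.I * t)).re) / n with hg
  have hgnn : ∀ n : ℕ, 0 < n → 0 ≤ g n := by
    intro n hn
    have h1 : |(χ (n : ZMod q) * (n : ℂ) ^ (Complex.I * (t:ℂ))).re| ≤ 1 :=
      (Complex.abs_re_le_norm _).trans (norm_char_mul_cpow_I_le χ t hn)
    have := abs_le.mp h1
    have : (0:ℝ) ≤ 1 + (χ (n : ZMod q) * (n : ℂ) ^ (Complex.I * (t:ℂ))).re := by linarith [this.1]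
    positivity
  set f : ℕ → ℝ := fun n => if n.Prime then g n else 0 with hf
  have hf0 : ∀ n, 0 ≤ f n := by
    intro n
    rw [hf]
    by_cases hn : n.Prime
    · simp only [hn, if_true]
      exact hgnn n hn.pos
    · simp [hn]
  -- non-summability over primes
  have hP : ¬ Summable (fun p : Nat.Primes => g (p:ℕ)) := by
    rcases Nat.eq_zero_or_pos q with hq | hq
    · subst hq
      intro hsum
      refine Nat.Primes.not_summable_one_div (hsum.of_nonneg_of_le
        (fun p => by positivity) (fun p => ?_))
      have hnu : ¬ IsUnit (((p:ℕ) : ℤ)) := by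
        rw [Int.isUnit_iff]
        push_neg
        constructor
        · exact_mod_cast p.prop.one_lt.ne'
        · intro hc
          have : (0:ℤ) ≤ ((p:ℕ):ℤ) := Int.natCast_nonneg _
          omega
      have hχ0 : χ ((p:ℕ) : ZMod 0) = 0 := χ.map_nonunit hnu
      rw [hg]
      simp only [hχ0, zero_mul, Complex.zero_re, add_zero]
      rw [one_div]
    · haveI : NeZero q := ⟨hq.ne'⟩
      by_cases hχt : χ = 1 ∧ t = 0
      · obtain ⟨hχ, ht⟩ := hχt
        subst hχ; subst ht
        intro hsum
        refine Nat.Primes.not_summable_one_div (hsum.of_nonneg_of_le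
          (fun p => by positivity) (fun p => ?_))
        rw [one_div]
        show ((p:ℕ):ℝ)⁻¹ ≤ (1 + ((1 : DirichletCharacter ℂ q) ((p:ℕ) : ZMod q)
            * ((p:ℕ):ℂ) ^ (Complex.I * ((0:ℝ):ℂ))).re) / ((p:ℕ):ℝ)
        have hpos : (0:ℝ) < ((p:ℕ):ℝ) := by exact_mod_cast p.prop.pos
        rw [div_eq_mul_inv]
        have hre : 0 ≤ ((1 : DirichletCharacter ℂ q) ((p:ℕ) : ZMod q)
            * ((p:ℕ):ℂ) ^ (Complex.I * ((0:ℝ):ℂ))).re := by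
          rw [show ((0:ℝ):ℂ) = 0 from rfl, mul_zero, cpow_zero, mul_one]
          by_cases hu : IsUnit ((p:ℕ) : ZMod q)
          · rw [MulChar.one_apply hu]; norm_num
          · rw [MulChar.map_nonunit _ hu]; norm_num
        nlinarith [inv_pos.mpr hpos]
      · have h' : χ ≠ 1 ∨ t ≠ 0 := by
          rcases not_and_or.mp hχt with h' | h'
          · exact Or.inl h'
          · exact Or.inr h'
        have := not_summable_pretend χ t h' (ε := 1) (by norm_num)
        simp only [one_mul] at this
        exact fun hsum => this (by simpa [hg] using hsum)
  have hfns : ¬ Summable f := by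
    intro hsum
    refine hP ?_
    have := hsum.subtype {n : ℕ | n.Prime}
    refine (summable_congr (fun p : Nat.Primes => ?_)).mp this
    show f (p:ℕ) = g (p:ℕ)
    rw [hf]
    simp [p.prop]
  have := (not_summable_iff_tendsto_nat_atTop_of_nonneg hf0).mp hfns
  refine this.congr (fun N => ?_)
  rw [← Finset.sum_filter]
end
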